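/- arXiv:2211.14666 — 3 statements merged into one kernel-verified Lean document; each statement's English description precedes it below -/
import Mathlib

section
/- Let P be a Borel probability measure on ℝ^{k×m} with topological support 𝒲. The following are equivalent: (i) there exist W^(1),…,W^(m) ∈ 𝒲 and indices i_1,…,i_m ∈ {1,…,k} such that the rows W^(1)_{i_1,:},…,W^(m)_{i_m,:} are linearly independent; (ii) for every Borel set E₀ ⊆ ℝ^{k×m} with P(E₀) = 0, there exist W^(1),…,W^(m) ∈ 𝒲 \ E₀ and indices i_1,…,i_m ∈ {1,…,k} such that the rows W^(1)_{i_1,:},…,W^(m)_{i_m,:} are linearly independent. -/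
open MeasureTheory

/-- Matrices over `ℝ` carry the Borel σ-algebra of their (product) topology. -/
noncomputable instance matrixMeasurableSpace {k m : ℕ} :
    MeasurableSpace (Matrix (Fin k) (Fin m) ℝ) := borel _

instance matrixBorelSpace {k m : ℕ} : BorelSpace (Matrix (Fin k) (Fin m) ℝ) := ⟨rfl⟩

/-- The topological support of a measure: the points all of whose open neighbourhoods
have positive measure. -/
def msupport {α : Type*} [TopologicalSpace α] [MeasurableSpace α] (P : Measure α) : Set α :=
  {x | ∀ U : Set α, IsOpen U → x ∈ U → 0 < P U}

/-- **Sufficient task variability is automatically robust to null sets.**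
For a Borel probability measure `P` on `ℝ^{k×m}` with topological support `𝒲`, the
following are equivalent: (i) there are `W⁽¹⁾,…,W⁽ᵐ⁾ ∈ 𝒲` and row indices
`i₁,…,iₘ` such that the rows `W⁽¹⁾_{i₁,:},…,W⁽ᵐ⁾_{iₘ,:}` are linearly independent;
(ii) for every Borel set `E₀` with `P E₀ = 0`, such matrices can be found in `𝒲 \ E₀`. -/
theorem sufficient_task_variability_ae {k m : ℕ}
    (P : Measure (Matrix (Fin k) (Fin m) ℝ)) [IsProbabilityMeasure P] :
    (∃ (Ws : Fin m → Matrix (Fin k) (Fin m) ℝ) (idx : Fin m → Fin k),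
        (∀ t, Ws t ∈ msupport P) ∧
        LinearIndependent ℝ fun t => Ws t (idx t)) ↔
    (∀ E₀ : Set (Matrix (Fin k) (Fin m) ℝ), MeasurableSet E₀ → P E₀ = 0 →
      ∃ (Ws : Fin m → Matrix (Fin k) (Fin m) ℝ) (idx : Fin m → Fin k),
        (∀ t, Ws t ∈ msupport P \ E₀) ∧
        LinearIndependent ℝ fun t => Ws t (idx t)) := by
  constructor
  · rintro ⟨Ws, idx, hmem, hli⟩ E₀ _ hE₀
    haveI : SecondCountableTopology (Matrix (Fin k) (Fin m) ℝ) :=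
      inferInstanceAs (SecondCountableTopology (Fin k → Fin m → ℝ))
    have hnull : P (msupport P)ᶜ = 0 := by
      apply measure_null_of_locally_null
      intro x hx
      simp only [msupport, Set.mem_compl_iff, Set.mem_setOf_eq, not_forall] at hx
      obtain ⟨U, hUo, hxU, hU⟩ := hx
      exact ⟨U, mem_nhdsWithin_of_mem_nhds (hUo.mem_nhds hxU),
        le_antisymm (not_lt.mp hU) zero_le⟩
    have hVopen : IsOpen {W' : Fin m → Matrix (Fin k) (Fin m) ℝ |
        LinearIndependent ℝ fun t => W' t (idx t)} := by
      have hc : Continuous fun (W' : Fin m → Matrix (Fin k) (Fin m) ℝ) =>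
          fun t => W' t (idx t) :=
        continuous_pi fun t => (continuous_apply (idx t)).comp (continuous_apply t)
      exact isOpen_setOf_linearIndependent.preimage hc
    obtain ⟨I, u, hu, hsub⟩ := isOpen_pi_iff.mp hVopen Ws hli
    set U' : Fin m → Set (Matrix (Fin k) (Fin m) ℝ) :=
      fun t => if t ∈ I then u t else Set.univ with hU'
    have hU'open : ∀ t, IsOpen (U' t) := by
      intro t; by_cases h : t ∈ I
      · simpa [hU', h] using (hu t h).1
      · simp [hU', h, isOpen_univ]
    have hU'mem : ∀ t, Ws t ∈ U' t := by
      intro t; by_cases h : t ∈ I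
      · simpa [hU', h] using (hu t h).2
      · simp [hU', h]
    have hne : ∀ t, (U' t ∩ (msupport P \ E₀)).Nonempty := by
      intro t
      apply MeasureTheory.nonempty_of_measure_ne_zero (μ := P)
      intro h0
      have hsubu : U' t ⊆ (U' t ∩ (msupport P \ E₀)) ∪ ((msupport P)ᶜ ∪ E₀) := by
        intro x hx
        by_cases h1 : x ∈ msupport P
        · by_cases h2 : x ∈ E₀
          · exact Or.inr (Or.inr h2)
          · exact Or.inl ⟨hx, h1, h2⟩
        · exact Or.inr (Or.inl h1)
      have : P (U' t) ≤ 0 := by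
        calc P (U' t) ≤ P ((U' t ∩ (msupport P \ E₀)) ∪ ((msupport P)ᶜ ∪ E₀)) :=
              measure_mono hsubu
          _ ≤ P (U' t ∩ (msupport P \ E₀)) + P ((msupport P)ᶜ ∪ E₀) := measure_union_le _ _
          _ ≤ P (U' t ∩ (msupport P \ E₀)) + (P (msupport P)ᶜ + P E₀) :=
              add_le_add le_rfl (measure_union_le _ _)
          _ = 0 := by rw [h0, hnull, hE₀]; simp
      exact absurd (hmem t _ (hU'open t) (hU'mem t)) (by simpa using this)
    choose W' hW' using hne
    refine ⟨W', idx, fun t => (hW' t).2, ?_⟩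
    apply hsub
    intro t ht
    have := (hW' t).1
    simp only [hU', Finset.mem_coe.mp ht, if_true] at this
    exact this
  · intro h
    obtain ⟨Ws, idx, hmem, hli⟩ := h ∅ MeasurableSet.empty (by simp)
    exact ⟨Ws, idx, fun t => (hmem t).1, hli⟩
end

section
/- (Linear identifiability.) Let X be a nonempty set, let f, f̂ : X → ℝ^m, let P be a Borel probability measure on ℝ^{k×m} with topological support 𝒲, let Ŵ : 𝒲 → ℝ^{k×m}, and let η ↦ ν_η (η ∈ ℝ^k) be a KL-identifiable family of probability measures. Suppose that for P-almost every W ∈ 𝒲 and every x ∈ X, klDiv(ν_{Ŵ(W) f̂(x)}, ν_{W f(x)}) = 0. Assume (A4): there exist x^(1),…,x^(m) ∈ X such that the matrix [f(x^(1)) ⋯ f(x^(m))] ∈ ℝ^{m×m} is invertible; and (A5): there exist W^(1),…,W^(m) ∈ 𝒲 and indices i_1,…,i_m ∈ {1,…,k} such that the rows W^(1)_{i_1,:},…,W^(m)_{i_m,:} are linearly independent. Then there exists an invertible matrix L ∈ ℝ^{m×m} such that f(x) = L f̂(x) for all x ∈ X, and Ŵ(W) = W L for P-almost every W. -/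
open MeasureTheory
open scoped ENNReal

/-- **Linear identifiability.**
Let `f, f̂ : X → ℝ^m`, let `P` be a Borel probability measure on `ℝ^{k×m}` with
topological support `𝒲 = msupport P`, let `Ŵ` assign to each task `W` an estimate
`Ŵ W`, and let `η ↦ ν η` be a KL-identifiable family of probability measures (`klDiv`
denotes the Kullback–Leibler divergence, valued in `ℝ≥0∞`, with `klDiv ρ ρ = 0`).
Assume the perfect-fit condition `klDiv (ν (Ŵ W ⬝ f̂ x)) (ν (W ⬝ f x)) = 0` for
`P`-a.e. `W` and every `x`, together with sufficient representation variability (A4) and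
sufficient task variability (A5).  Then there is an invertible `L ∈ ℝ^{m×m}` with
`f x = L (f̂ x)` for all `x` and `Ŵ W = W L` for `P`-a.e. `W`. -/
theorem linear_identifiability
    {X Y : Type*} [Nonempty X] [MeasurableSpace Y] {k m : ℕ}
    (f fhat : X → Fin m → ℝ)
    (P : Measure (Matrix (Fin k) (Fin m) ℝ)) [IsProbabilityMeasure P]
    (What : Matrix (Fin k) (Fin m) ℝ → Matrix (Fin k) (Fin m) ℝ)
    (ν : (Fin k → ℝ) → Measure Y) [∀ η, IsProbabilityMeasure (ν η)]
    (klDiv : Measure Y → Measure Y → ℝ≥0∞)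
    (hkl_self : ∀ ρ : Measure Y, klDiv ρ ρ = 0)
    (hkl_id : ∀ η η' : Fin k → ℝ, klDiv (ν η) (ν η') = 0 → η = η')
    (hfit : ∀ᵐ W ∂P, ∀ x : X,
      klDiv (ν ((What W).mulVec (fhat x))) (ν (W.mulVec (f x))) = 0)
    (hA4 : ∃ xs : Fin m → X, IsUnit (Matrix.of fun i t => f (xs t) i).det)
    (hA5 : ∃ (Ws : Fin m → Matrix (Fin k) (Fin m) ℝ) (idx : Fin m → Fin k),
      (∀ t, Ws t ∈ msupport P) ∧
      LinearIndependent ℝ fun t => Ws t (idx t)) :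
    ∃ L : Matrix (Fin m) (Fin m) ℝ, IsUnit L.det ∧
      (∀ x : X, f x = L.mulVec (fhat x)) ∧
      (∀ᵐ W ∂P, What W = W * L) := by
  classical
  obtain ⟨xs, hF⟩ := hA4
  obtain ⟨Ws, idx, hWs, hli⟩ := hA5
  set F : Matrix (Fin m) (Fin m) ℝ := Matrix.of fun i t => f (xs t) i with hFdef
  set Fhat : Matrix (Fin m) (Fin m) ℝ := Matrix.of fun i t => fhat (xs t) i with hFhatdef
  -- the good set S
  set S : Set (Matrix (Fin k) (Fin m) ℝ) :=
    {W | ∀ x : X, (What W).mulVec (fhat x) = W.mulVec (f x)} with hSdef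
  have hSae : ∀ᵐ W ∂P, W ∈ S := by
    filter_upwards [hfit] with W h x
    exact hkl_id _ _ (h x)
  have hScompl : P Sᶜ = 0 := by
    exact ae_iff.mp hSae
  -- key cancellation lemma
  have key : ∀ v : Fin m → ℝ, (∀ W ∈ S, W.mulVec v = 0) → v = 0 := by
    intro v hv
    set B : Matrix (Fin m) (Fin m) ℝ := Matrix.of fun t => Ws t (idx t) with hBdef
    have hB : IsUnit B := Matrix.linearIndependent_rows_iff_isUnit.mp hli
    have hBv : B.mulVec v = 0 := by
      funext t
      by_contra hne
      have hcont : Continuous fun W : Matrix (Fin k) (Fin m) ℝ => dotProduct (W (idx t)) v := by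
        unfold dotProduct
        exact continuous_finset_sum _ fun j _ =>
          (((continuous_apply j).comp (continuous_apply (idx t)) : Continuous fun W : Matrix (Fin k) (Fin m) ℝ => W (idx t) j).mul continuous_const)
      set U : Set (Matrix (Fin k) (Fin m) ℝ) := {W | dotProduct (W (idx t)) v ≠ 0} with hUdef
      have hUopen : IsOpen U := isOpen_compl_singleton.preimage hcont
      have hmem : Ws t ∈ U := by
        simpa [hUdef, hBdef, Matrix.mulVec] using hne
      have hpos : 0 < P U := hWs t U hUopen hmem
      have hsub : U ⊆ Sᶜ := by
        intro W hW hWS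
        exact hW (by simpa [Matrix.mulVec] using congrFun (hv W hWS) (idx t))
      exact absurd (le_antisymm ((measure_mono hsub).trans_eq hScompl) zero_le) hpos.ne'
    have hBv' : B.mulVec v = B.mulVec 0 := by simpa using hBv
    exact Matrix.mulVec_injective_iff_isUnit.mpr hB hBv'
  -- on S, W * F = What W * Fhat
  have hWF : ∀ W ∈ S, W * F = What W * Fhat := by
    intro W hW
    ext i t
    have := congrFun (hW (xs t)) i
    simp only [Matrix.mulVec, dotProduct] at this
    simp only [Matrix.mul_apply, hFdef, hFhatdef, Matrix.of_apply]
    exact this.symm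
  -- Fhat is invertible
  have hFhat : IsUnit Fhat.det := by
    by_contra h
    have hdet : Fhat.det = 0 := by
      rcases eq_or_ne Fhat.det 0 with h0 | h0
      · exact h0
      · exact absurd (IsUnit.mk0 _ h0) h
    obtain ⟨c, hc0, hc⟩ := Matrix.exists_mulVec_eq_zero_iff.mpr hdet
    have hFc : F.mulVec c = 0 := by
      apply key
      intro W hW
      calc W.mulVec (F.mulVec c) = (W * F).mulVec c := (Matrix.mulVec_mulVec _ _ _)
        _ = (What W * Fhat).mulVec c := by rw [hWF W hW]
        _ = (What W).mulVec (Fhat.mulVec c) := (Matrix.mulVec_mulVec _ _ _).symm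
        _ = 0 := by rw [hc, Matrix.mulVec_zero]
    have hFunit : IsUnit F := (Matrix.isUnit_iff_isUnit_det F).mpr hF
    have := Matrix.mulVec_injective_iff_isUnit.mpr hFunit
    exact hc0 (this (by simpa using hFc))
  have hFhatInv : Fhat * Fhat⁻¹ = 1 := Matrix.mul_nonsing_inv _ hFhat
  refine ⟨F * Fhat⁻¹, ?_, ?_, ?_⟩
  · rw [Matrix.det_mul, Matrix.det_nonsing_inv, Ring.inverse_eq_inv']
    rw [isUnit_iff_ne_zero]
    exact mul_ne_zero (by simpa [isUnit_iff_ne_zero] using hF)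
      (inv_ne_zero (by simpa [isUnit_iff_ne_zero] using hFhat))
  · intro x
    have hv : (f x - (F * Fhat⁻¹).mulVec (fhat x)) = 0 := by
      apply key
      intro W hW
      have h1 : W.mulVec (f x) = (W * (F * Fhat⁻¹)).mulVec (fhat x) := by
        calc W.mulVec (f x) = (What W).mulVec (fhat x) := (hW x).symm
          _ = (What W * (Fhat * Fhat⁻¹)).mulVec (fhat x) := by rw [hFhatInv, Matrix.mul_one]
          _ = ((What W * Fhat) * Fhat⁻¹).mulVec (fhat x) := by rw [Matrix.mul_assoc]
          _ = ((W * F) * Fhat⁻¹).mulVec (fhat x) := by rw [hWF W hW]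
          _ = (W * (F * Fhat⁻¹)).mulVec (fhat x) := by rw [Matrix.mul_assoc]
      rw [Matrix.mulVec_sub, h1, ← Matrix.mulVec_mulVec, Matrix.mulVec_mulVec, sub_self]
    have := sub_eq_zero.mp hv
    exact this
  · filter_upwards [hSae] with W hW
    calc What W = What W * (Fhat * Fhat⁻¹) := by rw [hFhatInv, Matrix.mul_one]
      _ = (What W * Fhat) * Fhat⁻¹ := by rw [Matrix.mul_assoc]
      _ = (W * F) * Fhat⁻¹ := by rw [hWF W hW]
      _ = W * (F * Fhat⁻¹) := by rw [Matrix.mul_assoc]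
end

section
/- (Disentanglement via task sparsity.) Let X be a nonempty set, let f, f̂ : X → ℝ^m, let P be a Borel probability measure on ℝ^{k×m} with topological support 𝒲, let Ŵ : 𝒲 → ℝ^{k×m} be measurable, and let η ↦ ν_η (η ∈ ℝ^k) be a KL-identifiable family of probability measures. Suppose that for P-almost every W ∈ 𝒲 and every x ∈ X, klDiv(ν_{Ŵ(W) f̂(x)}, ν_{W f(x)}) = 0. Assume: (A4) there exist x^(1),…,x^(m) ∈ X such that [f(x^(1)) ⋯ f(x^(m))] ∈ ℝ^{m×m} is invertible; (A5) there exist W^(1),…,W^(m) ∈ 𝒲 and indices i_1,…,i_m ∈ {1,…,k} with rows W^(1)_{i_1,:},…,W^(m)_{i_m,:} linearly independent; (A6) for every S ⊆ {1,…,m} with P[colsupp(W) = S] > 0 and every nonzero a ∈ ℝ^m with supp(a) ⊆ S, P[{W : W a = 0} ∩ {colsupp(W) = S}] = 0; (A7) for every j ∈ {1,…,m}, the union of all sets S with P[colsupp(W) = S] > 0 and j ∉ S equals {1,…,m} \ {j}. If moreover ∫ ‖Ŵ(W)‖_{2,0} dP(W) ≤ ∫ ‖W‖_{2,0} dP(W),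 then f̂ is disentangled with respect to f: there exist a permutation matrix Π ∈ ℝ^{m×m} and an invertible diagonal matrix D ∈ ℝ^{m×m} such that f̂(x) = D Π f(x) for all x ∈ X. -/
open MeasureTheory
open scoped ENNReal BigOperators

/-- The column support of a matrix: indices of its nonzero columns. -/
def colSupp {k m : ℕ} (W : Matrix (Fin k) (Fin m) ℝ) : Set (Fin m) :=
  {j | ∃ i, W i j ≠ 0}

/-- The column sparsity `‖A‖_{2,0}`: the number of nonzero columns. -/
noncomputable def colSparsity {k m : ℕ} (W : Matrix (Fin k) (Fin m) ℝ) : ℕ :=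
  (colSupp W).ncard

/-- A matrix is a permutation matrix if it is obtained from a permutation `σ`
by putting a `1` in entry `(i, σ i)` and `0` elsewhere. -/
def IsPermMatrix {m : ℕ} (P : Matrix (Fin m) (Fin m) ℝ) : Prop :=
  ∃ σ : Equiv.Perm (Fin m), P = Matrix.of fun i j => if σ i = j then (1 : ℝ) else 0

private lemma entry_measurable {k m : ℕ} (i : Fin k) (j : Fin m) :
    Measurable fun W : Matrix (Fin k) (Fin m) ℝ => W i j :=
  (Continuous.matrix_elem continuous_id i j).measurable

private lemma colSupp_measurable {k m : ℕ} (S : Set (Fin m)) :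
    MeasurableSet {W : Matrix (Fin k) (Fin m) ℝ | colSupp W = S} := by
  classical
  have : {W : Matrix (Fin k) (Fin m) ℝ | colSupp W = S}
      = ⋂ j : Fin m, {W | j ∈ S ↔ ∃ i, W i j ≠ 0} := by
    ext W
    simp only [Set.mem_setOf_eq, Set.mem_iInter]
    constructor
    · intro h j
      rw [← h]
      exact Iff.rfl
    · intro h
      ext j
      exact (h j).symm
  rw [this]
  apply MeasurableSet.iInter
  intro j
  by_cases hj : j ∈ S
  · have : {W : Matrix (Fin k) (Fin m) ℝ | j ∈ S ↔ ∃ i, W i j ≠ 0}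
        = ⋃ i : Fin k, {W | W i j ≠ 0} := by
      ext W; simp [hj]
    rw [this]
    exact MeasurableSet.iUnion fun i =>
      (measurableSet_eq_fun (entry_measurable i j) measurable_const).compl
  · have : {W : Matrix (Fin k) (Fin m) ℝ | j ∈ S ↔ ∃ i, W i j ≠ 0}
        = ⋂ i : Fin k, {W | W i j = 0} := by
      ext W
      simp only [Set.mem_setOf_eq, Set.mem_iInter]
      constructor
      · intro h i
        by_contra hne
        exact hj (h.2 ⟨i, hne⟩)
      · intro h
        exact ⟨fun h' => absurd h' hj, fun ⟨i, hi⟩ => absurd (h i) hi⟩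
    rw [this]
    exact MeasurableSet.iInter fun i =>
      measurableSet_eq_fun (entry_measurable i j) measurable_const



lemma aux_card_le_union {m : ℕ} {L : Matrix (Fin m) (Fin m) ℝ} (hL : IsUnit L.det)
    (T : Set (Fin m)) :
    T.ncard ≤ (⋃ i ∈ T, {j | L i j ≠ 0}).ncard := by
  classical
  set U : Set (Fin m) := ⋃ i ∈ T, {j | L i j ≠ 0} with hU
  haveI : Fintype T := Fintype.ofFinite _
  haveI : Fintype U := Fintype.ofFinite _
  have hrows : LinearIndependent ℝ (fun i : Fin m => L i) :=
    Matrix.linearIndependent_rows_iff_isUnit.2 ((Matrix.isUnit_iff_isUnit_det L).2 hL)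
  have hrowsT : LinearIndependent ℝ (fun i : T => L (i : Fin m)) :=
    hrows.comp Subtype.val Subtype.val_injective
  have hli : LinearIndependent ℝ (fun i : T => (fun j : U => L (i : Fin m) (j : Fin m))) := by
    rw [Fintype.linearIndependent_iff]
    intro c hc
    have hw : ∑ i : T, c i • (L (i : Fin m)) = 0 := by
      funext j
      by_cases hj : j ∈ U
      · have := congrFun hc ⟨j, hj⟩
        simpa using this
      · have hzero : ∀ i : T, L (i : Fin m) j = 0 := by
          intro i
          by_contra hne
          exact hj (Set.mem_biUnion i.2 hne)
        simp only [Finset.sum_apply, Pi.smul_apply, smul_eq_mul, Pi.zero_apply]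
        exact Finset.sum_eq_zero fun i _ => by rw [hzero i, mul_zero]
    exact Fintype.linearIndependent_iff.1 hrowsT c hw
  have hcard : Fintype.card T ≤ Fintype.card U := by
    have := hli.fintype_card_le_finrank
    rwa [Module.finrank_fintype_fun_eq_card] at this
  rw [Set.ncard_eq_toFinset_card' T, Set.toFinset_card, Set.ncard_eq_toFinset_card' U,
    Set.toFinset_card]
  exact hcard


lemma aux_perm {m : ℕ} (R : Fin m → Set (Fin m)) (S𝒮 : Set (Set (Fin m)))
    (hlow : ∀ T : Set (Fin m), T.ncard ≤ (⋃ i ∈ T, R i).ncard)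
    (htight : ∀ S ∈ S𝒮, (⋃ i ∈ S, R i).ncard = S.ncard)
    (hcover : ∀ j : Fin m, (⋃ S ∈ {S | S ∈ S𝒮 ∧ j ∉ S}, S) = ({j}ᶜ : Set (Fin m))) :
    ∃ σ : Equiv.Perm (Fin m), ∀ i, R i = {σ i} := by
  classical
  set g : Set (Fin m) → ℕ := fun T => (⋃ i ∈ T, R i).ncard with hg
  have hunion : ∀ A B : Set (Fin m), g A = A.ncard → g B = B.ncard →
      g (A ∪ B) = (A ∪ B).ncard := by
    intro A B hA hB
    have hUeq : (⋃ i ∈ A ∪ B, R i) = (⋃ i ∈ A, R i) ∪ (⋃ i ∈ B, R i) :=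
      Set.biUnion_union A B R
    have h1 : ((⋃ i ∈ A, R i) ∪ (⋃ i ∈ B, R i)).ncard
        + ((⋃ i ∈ A, R i) ∩ (⋃ i ∈ B, R i)).ncard
        = (⋃ i ∈ A, R i).ncard + (⋃ i ∈ B, R i).ncard :=
      Set.ncard_union_add_ncard_inter _ _ (Set.toFinite _) (Set.toFinite _)
    have h2 : (⋃ i ∈ A ∩ B, R i) ⊆ (⋃ i ∈ A, R i) ∩ (⋃ i ∈ B, R i) := by
      intro x hx
      rcases Set.mem_iUnion₂.1 hx with ⟨i, hi, hxi⟩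
      exact ⟨Set.mem_biUnion hi.1 hxi, Set.mem_biUnion hi.2 hxi⟩
    have h3 : g (A ∩ B) ≤ ((⋃ i ∈ A, R i) ∩ (⋃ i ∈ B, R i)).ncard :=
      Set.ncard_le_ncard h2 (Set.toFinite _)
    have h4 : (A ∩ B).ncard ≤ g (A ∩ B) := hlow _
    have h5 : (A ∪ B).ncard + (A ∩ B).ncard = A.ncard + B.ncard :=
      Set.ncard_union_add_ncard_inter _ _ (Set.toFinite _) (Set.toFinite _)
    have hle : g (A ∪ B) + (A ∩ B).ncard ≤ (A ∪ B).ncard + (A ∩ B).ncard := by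
      calc g (A ∪ B) + (A ∩ B).ncard
          ≤ g (A ∪ B) + ((⋃ i ∈ A, R i) ∩ (⋃ i ∈ B, R i)).ncard := by
            exact Nat.add_le_add_left (le_trans h4 h3) _
        _ = A.ncard + B.ncard := by
            show (⋃ i ∈ A ∪ B, R i).ncard + ((⋃ i ∈ A, R i) ∩ ⋃ i ∈ B, R i).ncard = _
            rw [hUeq, h1, ← hA, ← hB]
        _ = (A ∪ B).ncard + (A ∩ B).ncard := h5.symm
    exact le_antisymm (Nat.le_of_add_le_add_right hle) (hlow _)
  -- finite unions of tight sets are tight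
  have hfinset : ∀ 𝒯 : Finset (Set (Fin m)), (∀ S ∈ 𝒯, g S = S.ncard) →
      g (⋃ S ∈ 𝒯, S) = (⋃ S ∈ 𝒯, S).ncard := by
    intro 𝒯
    induction 𝒯 using Finset.induction_on with
    | empty => intro _; simp [hg]
    | @insert a s ha ih =>
      intro h
      have h1 : (⋃ S ∈ insert a s, S) = a ∪ ⋃ S ∈ s, S := by
        simp [Set.biUnion_insert]
      rw [h1]
      exact hunion _ _ (h a (Finset.mem_insert_self a s))
        (ih fun S hS => h S (Finset.mem_insert_of_mem hS))
  -- tightness of {j}ᶜ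
  have hcompl : ∀ j : Fin m, g ({j}ᶜ) = ({j}ᶜ : Set (Fin m)).ncard := by
    intro j
    have hfin : {S | S ∈ S𝒮 ∧ j ∉ S}.Finite := Set.toFinite _
    have heq : (⋃ S ∈ hfin.toFinset, S) = ({j}ᶜ : Set (Fin m)) := by
      rw [← hcover j]
      ext x
      simp [Set.Finite.mem_toFinset]
    have := hfinset hfin.toFinset (fun S hS => htight S ((Set.Finite.mem_toFinset hfin).1 hS).1)
    rwa [heq] at this
  -- the whole union is univ
  have huniv : (⋃ i ∈ (Set.univ : Set (Fin m)), R i) = Set.univ := by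
    apply Set.eq_of_subset_of_ncard_le (Set.subset_univ _) _ (Set.toFinite _)
    · rw [Set.ncard_univ]
      have := hlow Set.univ
      rwa [Set.ncard_univ] at this
  -- pick c j
  have hpick : ∀ j : Fin m, ∃ cj : Fin m, cj ∈ R j ∧ cj ∉ ⋃ i ∈ ({j}ᶜ : Set (Fin m)), R i := by
    intro j
    have hne : (⋃ i ∈ ({j}ᶜ : Set (Fin m)), R i) ≠ Set.univ := by
      intro h
      have h1 : g ({j}ᶜ) = (Set.univ : Set (Fin m)).ncard := by rw [hg]; simp only []; rw [h]
      have h2 : ({j}ᶜ : Set (Fin m)).ncard < (Set.univ : Set (Fin m)).ncard := by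
        apply Set.ncard_lt_ncard _ (Set.toFinite _)
        constructor
        · exact Set.subset_univ _
        · intro hsub
          exact (hsub (Set.mem_univ j)) rfl
      rw [hcompl j] at h1
      omega
    rcases Set.ne_univ_iff_exists_notMem _ |>.1 hne with ⟨cj, hcj⟩
    refine ⟨cj, ?_, hcj⟩
    have : cj ∈ ⋃ i ∈ (Set.univ : Set (Fin m)), R i := by rw [huniv]; trivial
    rcases Set.mem_iUnion₂.1 this with ⟨i, _, hi⟩
    by_cases hij : i = j
    · rwa [hij] at hi
    · exact absurd (Set.mem_biUnion (by simpa using hij) hi) hcj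
  choose c hc1 hc2 using hpick
  have hinj : Function.Injective c := by
    intro j j' hjj'
    by_contra hne
    apply hc2 j'
    rw [← hjj']
    exact Set.mem_biUnion (by simpa using hne) (hc1 j)
  have hbij : Function.Bijective c := Finite.injective_iff_bijective.1 hinj
  refine ⟨Equiv.ofBijective c hbij, fun i => ?_⟩
  ext d
  simp only [Set.mem_singleton_iff, Equiv.ofBijective_apply]
  constructor
  · intro hd
    rcases hbij.2 d with ⟨i', rfl⟩
    by_contra hne
    have hne' : i ≠ i' := fun h => hne (by rw [h])
    exact hc2 i' (Set.mem_biUnion (by simpa using hne') hd)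
  · intro h; rw [h]; exact hc1 i

private lemma aux_linear_part {X : Type*} [Nonempty X] {k m : ℕ}
    (f fhat : X → Fin m → ℝ)
    (P : Measure (Matrix (Fin k) (Fin m) ℝ)) [IsProbabilityMeasure P]
    (What : Matrix (Fin k) (Fin m) ℝ → Matrix (Fin k) (Fin m) ℝ)
    (hfit' : ∀ᵐ W ∂P, ∀ x : X, (What W).mulVec (fhat x) = W.mulVec (f x))
    (hA4 : ∃ xs : Fin m → X, IsUnit (Matrix.of fun i t => f (xs t) i).det)
    (hA5 : ∃ (Ws : Fin m → Matrix (Fin k) (Fin m) ℝ) (idx : Fin m → Fin k),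
      (∀ t, Ws t ∈ msupport P) ∧
      LinearIndependent ℝ fun t => Ws t (idx t)) :
    ∃ L M : Matrix (Fin m) (Fin m) ℝ, IsUnit L.det ∧ M * L = 1 ∧
      (∀ x, fhat x = M.mulVec (f x)) ∧ (∀ᵐ W ∂P, What W = W * L) := by
  classical
  obtain ⟨xs, hF⟩ := hA4
  obtain ⟨Ws, idx, hWsupp, hWli⟩ := hA5
  set F : Matrix (Fin m) (Fin m) ℝ := Matrix.of fun i t => f (xs t) i with hFdef
  set Fhat : Matrix (Fin m) (Fin m) ℝ := Matrix.of fun i t => fhat (xs t) i with hFhatdef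
  set G : Set (Matrix (Fin k) (Fin m) ℝ) :=
    {W | ∀ x : X, (What W).mulVec (fhat x) = W.mulVec (f x)} with hGdef
  have hGae : ∀ᵐ W ∂P, W ∈ G := hfit'
  have hGc : P Gᶜ = 0 := by
    rw [← MeasureTheory.mem_ae_iff]
    exact hGae
  -- density
  have hdense : ∀ W₀ ∈ msupport P, ∀ C : Set (Matrix (Fin k) (Fin m) ℝ),
      IsClosed C → G ⊆ C → W₀ ∈ C := by
    intro W₀ hW₀ C hC hGC
    by_contra hW₀C
    have hU : IsOpen Cᶜ := hC.isOpen_compl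
    have hpos : 0 < P Cᶜ := hW₀ Cᶜ hU hW₀C
    have hsub : Cᶜ ⊆ Gᶜ := Set.compl_subset_compl.2 hGC
    have : P Cᶜ ≤ P Gᶜ := measure_mono hsub
    rw [hGc] at this
    exact absurd (le_antisymm this zero_le) (ne_of_gt hpos)
  -- G members satisfy matrix equation
  have hGmat : ∀ W ∈ G, What W * Fhat = W * F := by
    intro W hW
    ext i t
    have := congrFun (hW (xs t)) i
    simpa [Matrix.mul_apply, Matrix.mulVec, dotProduct, hFdef, hFhatdef] using this
  -- Fhat is invertible
  have hVtop : LinearMap.range (Matrix.vecMulLinear Fhat) = ⊤ := by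
    set V := LinearMap.range (Matrix.vecMulLinear Fhat) with hV
    set C : Set (Matrix (Fin k) (Fin m) ℝ) := {W | ∀ i, (W * F) i ∈ V} with hCdef
    have hCclosed : IsClosed C := by
      have : C = ⋂ i : Fin k, (fun W : Matrix (Fin k) (Fin m) ℝ => (W * F) i) ⁻¹' V := by
        ext W; simp [hCdef]
      rw [this]
      apply isClosed_iInter
      intro i
      apply IsClosed.preimage
      · apply continuous_pi
        intro j
        have : (fun W : Matrix (Fin k) (Fin m) ℝ => (W * F) i j)
            = fun W => ∑ c, W i c * F c j := by
          funext W; simp [Matrix.mul_apply]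
        rw [this]
        exact continuous_finset_sum _ fun c _ =>
          (Continuous.matrix_elem continuous_id i c).mul continuous_const
      · exact Submodule.closed_of_finiteDimensional V
    have hGC : G ⊆ C := by
      intro W hW i
      rw [hGmat W hW |>.symm]
      exact ⟨What W i, by funext j; simp [Matrix.vecMul, Matrix.mul_apply, dotProduct]⟩
    have hmem : ∀ t, (Ws t * F) (idx t) ∈ V := fun t =>
      (hdense (Ws t) (hWsupp t) C hCclosed hGC) (idx t)
    -- the vectors (Ws t * F) (idx t) are linearly independent
    have hrow : ∀ t, (Ws t * F) (idx t) = Matrix.vecMulLinear F (Ws t (idx t)) := by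
      intro t
      funext j
      simp [Matrix.vecMulLinear_apply, Matrix.vecMul, Matrix.mul_apply, dotProduct]
    have hFunit : IsUnit F := (Matrix.isUnit_iff_isUnit_det F).2 hF
    have hinj : Function.Injective (Matrix.vecMulLinear F) := by
      rw [Matrix.coe_vecMulLinear]
      exact Matrix.vecMul_injective_iff_isUnit.2 hFunit
    have hli : LinearIndependent ℝ (fun t => (Ws t * F) (idx t)) := by
      have h2 := hWli.map' (Matrix.vecMulLinear F) (LinearMap.ker_eq_bot.2 hinj)
      have h3 : (fun t => (Ws t * F) (idx t))
          = fun t => Matrix.vecMulLinear F (Ws t (idx t)) := funext hrow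
      rw [h3]
      exact h2
    -- so V contains m linearly independent vectors
    have hliV : LinearIndependent ℝ (fun t => (⟨(Ws t * F) (idx t), hmem t⟩ : V)) := by
      apply LinearIndependent.of_comp V.subtype
      convert hli using 1
      rfl
    have hfin : (m : ℕ) ≤ Module.finrank ℝ V := by
      have := hliV.fintype_card_le_finrank
      simpa using this
    apply Submodule.eq_top_of_finrank_eq
    have h1 : Module.finrank ℝ V ≤ Module.finrank ℝ (Fin m → ℝ) :=
      Submodule.finrank_le V
    rw [Module.finrank_fintype_fun_eq_card] at *
    simp only [Fintype.card_fin] at *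
    omega
  have hFhatunit : IsUnit Fhat := by
    rw [← Matrix.vecMul_surjective_iff_isUnit]
    intro v
    have : v ∈ LinearMap.range (Matrix.vecMulLinear Fhat) := by rw [hVtop]; trivial
    obtain ⟨w, hw⟩ := this
    exact ⟨w, by rw [← hw]; simp [Matrix.vecMulLinear_apply]⟩
  have hFhatdet : IsUnit Fhat.det := (Matrix.isUnit_iff_isUnit_det Fhat).1 hFhatunit
  set L : Matrix (Fin m) (Fin m) ℝ := F * Fhat⁻¹ with hLdef
  set M : Matrix (Fin m) (Fin m) ℝ := Fhat * F⁻¹ with hMdef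
  have hML : M * L = 1 := by
    rw [hMdef, hLdef]
    calc Fhat * F⁻¹ * (F * Fhat⁻¹) = Fhat * (F⁻¹ * F) * Fhat⁻¹ := by
          rw [Matrix.mul_assoc, Matrix.mul_assoc, Matrix.mul_assoc]
      _ = Fhat * Fhat⁻¹ := by rw [Matrix.nonsing_inv_mul F hF, Matrix.mul_one]
      _ = 1 := Matrix.mul_nonsing_inv Fhat hFhatdet
  have hLM : L * M = 1 := mul_eq_one_comm.1 hML
  have hLdet : IsUnit L.det := by
    have : (M * L).det = 1 := by rw [hML, Matrix.det_one]
    rw [Matrix.det_mul] at this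
    exact IsUnit.of_mul_eq_one _ (by rw [mul_comm] at this; exact this)
  -- What W = W * L on G
  have hWhatL : ∀ W ∈ G, What W = W * L := by
    intro W hW
    have h1 : What W * Fhat = W * F := hGmat W hW
    calc What W = What W * (Fhat * Fhat⁻¹) := by
          rw [Matrix.mul_nonsing_inv Fhat hFhatdet, Matrix.mul_one]
      _ = (What W * Fhat) * Fhat⁻¹ := by rw [Matrix.mul_assoc]
      _ = W * F * Fhat⁻¹ := by rw [h1]
      _ = W * L := by rw [hLdef, Matrix.mul_assoc]
  -- L.mulVec (fhat x) = f x for all x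
  have hLf : ∀ x, L.mulVec (fhat x) = f x := by
    intro x
    set v : Fin m → ℝ := L.mulVec (fhat x) - f x with hvdef
    set Cv : Set (Matrix (Fin k) (Fin m) ℝ) := {W | W.mulVec v = 0} with hCv
    have hclosed : IsClosed Cv := by
      have : Cv = ⋂ i : Fin k, {W : Matrix (Fin k) (Fin m) ℝ | (W.mulVec v) i = 0} := by
        ext W
        simp only [hCv, Set.mem_setOf_eq, Set.mem_iInter]
        constructor
        · intro h i; rw [h]; rfl
        · intro h; funext i; exact h i
      rw [this]
      apply isClosed_iInter
      intro i
      have : Continuous fun W : Matrix (Fin k) (Fin m) ℝ => (W.mulVec v) i := by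
        have : (fun W : Matrix (Fin k) (Fin m) ℝ => (W.mulVec v) i)
            = fun W => ∑ c, W i c * v c := by
          funext W; simp [Matrix.mulVec, dotProduct]
        rw [this]
        exact continuous_finset_sum _ fun c _ =>
          (Continuous.matrix_elem continuous_id i c).mul continuous_const
      exact isClosed_eq this continuous_const
    have hGCv : G ⊆ Cv := by
      intro W hW
      have h1 : (W * L).mulVec (fhat x) = W.mulVec (f x) := by
        rw [← hWhatL W hW]; exact hW x
      have h2 : W.mulVec (L.mulVec (fhat x)) = W.mulVec (f x) := by
        rw [Matrix.mulVec_mulVec]; exact h1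
      show W.mulVec v = 0
      rw [hvdef, Matrix.mulVec_sub, h2, sub_self]
    have hmem : ∀ t, (Ws t).mulVec v = 0 := fun t =>
      hdense (Ws t) (hWsupp t) Cv hclosed hGCv
    -- rows imply v = 0
    set N : Matrix (Fin m) (Fin m) ℝ := Matrix.of fun t j => Ws t (idx t) j with hN
    have hNli : LinearIndependent ℝ (fun t => N t) := hWli
    have hNunit : IsUnit N := Matrix.linearIndependent_rows_iff_isUnit.1 hNli
    have hNv : N.mulVec v = 0 := by
      funext t
      have := congrFun (hmem t) (idx t)
      simpa [Matrix.mulVec, dotProduct, hN] using this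
    have hv0 : v = 0 := by
      have hinj := Matrix.mulVec_injective_iff_isUnit.2 hNunit
      apply hinj
      rw [hNv, Matrix.mulVec_zero]
    have := sub_eq_zero.1 (hvdef ▸ hv0)
    exact this
  refine ⟨L, M, hLdet, hML, fun x => ?_, ?_⟩
  · have h1 : M.mulVec (L.mulVec (fhat x)) = fhat x := by
      rw [Matrix.mulVec_mulVec, hML, Matrix.one_mulVec]
    rw [← h1, hLf x]
  · exact hGae.mono fun W hW => hWhatL W hW

private lemma aux_sparsity_part {k m : ℕ}
    (P : Measure (Matrix (Fin k) (Fin m) ℝ)) [IsProbabilityMeasure P]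
    (What : Matrix (Fin k) (Fin m) ℝ → Matrix (Fin k) (Fin m) ℝ)
    (L : Matrix (Fin m) (Fin m) ℝ)
    (hlow : ∀ T : Set (Fin m), T.ncard ≤ (⋃ i ∈ T, {j | L i j ≠ 0}).ncard)
    (hWhatL : ∀ᵐ W ∂P, What W = W * L)
    (hA6 : ∀ S : Set (Fin m), 0 < P {W | colSupp W = S} →
      ∀ a : Fin m → ℝ, a ≠ 0 → {j | a j ≠ 0} ⊆ S →
        P ({W | W.mulVec a = 0} ∩ {W | colSupp W = S}) = 0)
    (hsparse : (∫⁻ W, (colSparsity (What W) : ℝ≥0∞) ∂P) ≤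
      ∫⁻ W, (colSparsity W : ℝ≥0∞) ∂P) :
    ∀ S : Set (Fin m), 0 < P {W | colSupp W = S} →
      (⋃ i ∈ S, {j | L i j ≠ 0}).ncard = S.ncard := by
  classical
  set R : Fin m → Set (Fin m) := fun i => {j | L i j ≠ 0} with hR
  set SL : Set (Fin m) → Set (Fin m) := fun S => ⋃ i ∈ S, R i with hSL
  set 𝒮 : Set (Set (Fin m)) := {S | 0 < P {W | colSupp W = S}} with h𝒮
  -- pointwise upper bound: colSupp (W*L) ⊆ SL (colSupp W)
  have hsub : ∀ W : Matrix (Fin k) (Fin m) ℝ, colSupp (W * L) ⊆ SL (colSupp W) := by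
    intro W j hj
    obtain ⟨i, hij⟩ := hj
    have : ∃ c, W i c * L c j ≠ 0 := by
      by_contra h
      push_neg at h
      apply hij
      simp only [Matrix.mul_apply]
      exact Finset.sum_eq_zero fun c _ => h c
    obtain ⟨c, hc⟩ := this
    exact Set.mem_biUnion (show c ∈ colSupp W from ⟨i, fun h => hc (by rw [h, zero_mul])⟩)
      (show j ∈ R c from fun h => hc (by rw [h, mul_zero]))
  -- a.e. lower bound per (S, j)
  have haeB : ∀ S : Set (Fin m), ∀ j : Fin m, ∀ᵐ W ∂P,
      S ∈ 𝒮 → j ∈ SL S → colSupp W = S → j ∈ colSupp (W * L) := by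
    intro S j
    by_cases hS : S ∈ 𝒮 ∧ j ∈ SL S
    · obtain ⟨hS1, hS2⟩ := hS
      obtain ⟨i₀, hi₀S, hi₀⟩ := Set.mem_iUnion₂.1 hS2
      set a : Fin m → ℝ := fun c => if c ∈ S then L c j else 0 with ha
      have ha0 : a ≠ 0 := by
        intro h
        have := congrFun h i₀
        simp only [ha, if_pos hi₀S, Pi.zero_apply] at this
        exact hi₀ this
      have hasupp : {c | a c ≠ 0} ⊆ S := by
        intro c hc
        by_contra hcS
        apply hc
        simp [ha, hcS]
      have hnull := hA6 S hS1 a ha0 hasupp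
      have hae := (MeasureTheory.measure_eq_zero_iff_ae_notMem).1 hnull
      refine hae.mono fun W hW => ?_
      intro _ _ hWS
      have hcol : ∀ i c, c ∉ S → W i c = 0 := by
        intro i c hcS
        by_contra hne
        exact hcS (hWS ▸ ⟨i, hne⟩)
      have hava : W.mulVec a = fun i => (W * L) i j := by
        funext i
        simp only [Matrix.mulVec, dotProduct, Matrix.mul_apply, ha]
        apply Finset.sum_congr rfl
        intro c _
        by_cases hcS : c ∈ S
        · rw [if_pos hcS]
        · rw [if_neg hcS, hcol i c hcS, mul_zero, zero_mul]
      have : W.mulVec a ≠ 0 := by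
        intro h
        exact hW ⟨h, hWS⟩
      rw [hava] at this
      obtain ⟨i, hi⟩ := Function.ne_iff.1 this
      exact ⟨i, hi⟩
    · exact MeasureTheory.ae_of_all _ fun W h1 h2 => absurd ⟨h1, h2⟩ hS
  -- a.e., colSupp W ∈ 𝒮
  have haeC : ∀ᵐ W ∂P, colSupp W ∈ 𝒮 := by
    rw [MeasureTheory.ae_iff]
    have : {W : Matrix (Fin k) (Fin m) ℝ | ¬ colSupp W ∈ 𝒮}
        ⊆ ⋃ S ∈ {S : Set (Fin m) | S ∉ 𝒮}, {W | colSupp W = S} := by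
      intro W hW
      exact Set.mem_biUnion hW rfl
    refine le_antisymm (le_trans (measure_mono this) (le_of_eq ?_)) zero_le
    rw [measure_biUnion_null_iff (Set.toFinite _).countable]
    intro S hS
    by_contra h
    exact hS (pos_iff_ne_zero.2 h)
  -- combine a.e. facts
  haveI : Countable (Set (Fin m)) := inferInstance
  have haeAll : ∀ᵐ W ∂P, ∀ S : Set (Fin m), ∀ j : Fin m,
      S ∈ 𝒮 → j ∈ SL S → colSupp W = S → j ∈ colSupp (W * L) := by
    rw [MeasureTheory.ae_all_iff]
    intro S
    rw [MeasureTheory.ae_all_iff]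
    exact haeB S
  have haeEq : ∀ᵐ W ∂P, colSupp (W * L) = SL (colSupp W) := by
    filter_upwards [haeAll, haeC] with W hW hWS
    apply Set.Subset.antisymm (hsub W)
    intro j hj
    exact hW (colSupp W) j hWS hj rfl
  have haeKey : ∀ᵐ W ∂P, colSparsity (What W) = (SL (colSupp W)).ncard := by
    filter_upwards [haeEq, hWhatL] with W h1 h2
    rw [colSparsity, h2, h1]
  intro S₀ hS₀
  by_contra hne
  have hlt : S₀.ncard < (SL S₀).ncard := lt_of_le_of_ne (hlow S₀) (Ne.symm hne)
  set E : Set (Matrix (Fin k) (Fin m) ℝ) := {W | colSupp W = S₀} with hE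
  have hEmeas : MeasurableSet E := colSupp_measurable S₀
  have hptwise : ∀ᵐ W ∂P,
      (colSparsity W : ℝ≥0∞) + E.indicator (fun _ => (1 : ℝ≥0∞)) W
        ≤ (colSparsity (What W) : ℝ≥0∞) := by
    filter_upwards [haeKey] with W h1
    rw [h1]
    by_cases hWE : W ∈ E
    · have hWS : colSupp W = S₀ := hWE
      have hnat : colSparsity W + 1 ≤ (SL (colSupp W)).ncard := by
        rw [colSparsity, hWS]
        omega
      rw [Set.indicator_of_mem hWE]
      calc (colSparsity W : ℝ≥0∞) + 1 = ((colSparsity W + 1 : ℕ) : ℝ≥0∞) := by push_cast; ring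
        _ ≤ _ := by exact_mod_cast hnat
    · rw [Set.indicator_of_notMem hWE, add_zero]
      exact_mod_cast hlow (colSupp W)
  have hint : ∫⁻ W, ((colSparsity W : ℝ≥0∞) + E.indicator (fun _ => (1 : ℝ≥0∞)) W) ∂P
      ≤ ∫⁻ W, (colSparsity (What W) : ℝ≥0∞) ∂P := lintegral_mono_ae hptwise
  rw [lintegral_add_right _ (measurable_const.indicator hEmeas)] at hint
  rw [lintegral_indicator_const hEmeas, one_mul] at hint
  have hfin : (∫⁻ W, (colSparsity W : ℝ≥0∞) ∂P) ≠ ⊤ := by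
    have hb : ∀ W : Matrix (Fin k) (Fin m) ℝ, (colSparsity W : ℝ≥0∞) ≤ (m : ℝ≥0∞) := by
      intro W
      have : colSparsity W ≤ m := by
        rw [colSparsity]
        calc (colSupp W).ncard ≤ (Set.univ : Set (Fin m)).ncard :=
              Set.ncard_le_ncard (Set.subset_univ _) (Set.toFinite _)
          _ = m := by rw [Set.ncard_univ]; simp
      exact_mod_cast this
    have : (∫⁻ W, (colSparsity W : ℝ≥0∞) ∂P) ≤ (m : ℝ≥0∞) := by
      calc (∫⁻ W, (colSparsity W : ℝ≥0∞) ∂P) ≤ ∫⁻ _, (m : ℝ≥0∞) ∂P :=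
            lintegral_mono hb
        _ = (m : ℝ≥0∞) := by rw [lintegral_const, measure_univ, mul_one]
    exact ne_top_of_le_ne_top (by simp) this
  have hle : (∫⁻ W, (colSparsity W : ℝ≥0∞) ∂P) + P E
      ≤ (∫⁻ W, (colSparsity W : ℝ≥0∞) ∂P) + 0 := by
    rw [add_zero]
    exact le_trans hint hsparse
  have hPE : P E ≤ 0 := (ENNReal.cancel_of_ne hfin) hle
  rw [hE] at hPE
  exact absurd (le_antisymm hPE zero_le) (ne_of_gt hS₀)

/-- **Disentanglement via task sparsity.**
Under perfect fit (`P`-a.e. task, every `x`), sufficient representation variability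
(A4), sufficient task variability (A5), intra-support sufficient task variability (A6),
sufficient support variability (A7), and the expected-sparsity bound
`∫ ‖Ŵ W‖_{2,0} dP ≤ ∫ ‖W‖_{2,0} dP`, the learned representation `f̂` is disentangled
w.r.t. `f`: there are a permutation matrix `Π` and an invertible diagonal matrix `D`
with `f̂ x = (D Π) (f x)` for all `x`. -/
theorem disentanglement_via_task_sparsity
    {X Y : Type*} [Nonempty X] [MeasurableSpace Y] {k m : ℕ}
    (f fhat : X → Fin m → ℝ)
    (P : Measure (Matrix (Fin k) (Fin m) ℝ)) [IsProbabilityMeasure P]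
    (What : Matrix (Fin k) (Fin m) ℝ → Matrix (Fin k) (Fin m) ℝ)
    (hWmeas : Measurable What)
    (ν : (Fin k → ℝ) → Measure Y) [∀ η, IsProbabilityMeasure (ν η)]
    (klDiv : Measure Y → Measure Y → ℝ≥0∞)
    (hkl_self : ∀ ρ : Measure Y, klDiv ρ ρ = 0)
    (hkl_id : ∀ η η' : Fin k → ℝ, klDiv (ν η) (ν η') = 0 → η = η')
    (hfit : ∀ᵐ W ∂P, ∀ x : X,
      klDiv (ν ((What W).mulVec (fhat x))) (ν (W.mulVec (f x))) = 0)
    (hA4 : ∃ xs : Fin m → X, IsUnit (Matrix.of fun i t => f (xs t) i).det)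
    (hA5 : ∃ (Ws : Fin m → Matrix (Fin k) (Fin m) ℝ) (idx : Fin m → Fin k),
      (∀ t, Ws t ∈ msupport P) ∧
      LinearIndependent ℝ fun t => Ws t (idx t))
    (hA6 : ∀ S : Set (Fin m), 0 < P {W | colSupp W = S} →
      ∀ a : Fin m → ℝ, a ≠ 0 → {j | a j ≠ 0} ⊆ S →
        P ({W | W.mulVec a = 0} ∩ {W | colSupp W = S}) = 0)
    (hA7 : ∀ j : Fin m,
      (⋃ S ∈ {S : Set (Fin m) | 0 < P {W | colSupp W = S} ∧ j ∉ S}, S) =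
        ({j}ᶜ : Set (Fin m)))
    (hsparse : (∫⁻ W, (colSparsity (What W) : ℝ≥0∞) ∂P) ≤
      ∫⁻ W, (colSparsity W : ℝ≥0∞) ∂P) :
    ∃ (Pmat D : Matrix (Fin m) (Fin m) ℝ),
      IsPermMatrix Pmat ∧ D.IsDiag ∧ IsUnit D.det ∧
      ∀ x : X, fhat x = (D * Pmat).mulVec (f x) := by
  classical
  have hfit' : ∀ᵐ W ∂P, ∀ x : X, (What W).mulVec (fhat x) = W.mulVec (f x) :=
    hfit.mono fun W hW x => hkl_id _ _ (hW x)
  obtain ⟨L, M, hLdet, hML, hfhat, hWhatL⟩ :=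
    aux_linear_part f fhat P What hfit' hA4 hA5
  have hlow := aux_card_le_union hLdet
  have htight := aux_sparsity_part P What L hlow hWhatL hA6 hsparse
  obtain ⟨σ, hσ⟩ := aux_perm (fun i => {j | L i j ≠ 0})
    {S | 0 < P {W | colSupp W = S}} hlow (fun S hS => htight S hS) hA7
  -- entry description of L
  have hLentry : ∀ i j, L i j ≠ 0 ↔ j = σ i := by
    intro i j
    constructor
    · intro h
      have : j ∈ {j | L i j ≠ 0} := h
      rw [hσ i] at this
      exact this
    · intro h
      have : j ∈ ({σ i} : Set (Fin m)) := h
      rw [← hσ i] at this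
      exact this
  have hdne : ∀ i : Fin m, L (σ⁻¹ i) i ≠ 0 := by
    intro i
    rw [hLentry]
    exact (show σ (σ⁻¹ i) = i from σ.apply_symm_apply i).symm
  set Pmat : Matrix (Fin m) (Fin m) ℝ :=
    Matrix.of fun i j => if σ⁻¹ i = j then (1 : ℝ) else 0 with hPmat
  set D : Matrix (Fin m) (Fin m) ℝ :=
    Matrix.diagonal fun i => (L (σ⁻¹ i) i)⁻¹ with hD
  have hDPL : D * Pmat * L = 1 := by
    ext i j
    rw [Matrix.mul_apply]
    have h1 : ∀ c, (D * Pmat) i c = if σ⁻¹ i = c then (L (σ⁻¹ i) i)⁻¹ else 0 := by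
      intro c
      rw [hD, Matrix.diagonal_mul, hPmat]
      simp [Matrix.of_apply, mul_ite]
    have h2 : ∑ c, (D * Pmat) i c * L c j
        = (L (σ⁻¹ i) i)⁻¹ * L (σ⁻¹ i) j := by
      rw [Finset.sum_congr rfl fun c _ => by rw [h1 c]]
      simp [ite_mul]
    rw [h2]
    by_cases hij : j = i
    · subst hij
      rw [inv_mul_cancel₀ (hdne j)]
      simp
    · have : L (σ⁻¹ i) j = 0 := by
        by_contra h
        have h2 := (hLentry _ _).1 h
        rw [show σ (σ⁻¹ i) = i from σ.apply_symm_apply i] at h2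
        exact hij h2
      rw [this, mul_zero]
      simp [Matrix.one_apply, Ne.symm hij]
  have hLM : L * M = 1 := mul_eq_one_comm.1 hML
  have hDPM : D * Pmat = M := by
    calc D * Pmat = D * Pmat * (L * M) := by rw [hLM, Matrix.mul_one]
      _ = (D * Pmat * L) * M := (Matrix.mul_assoc _ _ _).symm
      _ = M := by rw [hDPL, Matrix.one_mul]
  refine ⟨Pmat, D, ⟨σ⁻¹, rfl⟩, Matrix.isDiag_diagonal _, ?_, ?_⟩
  · rw [hD, Matrix.det_diagonal]
    rw [isUnit_iff_ne_zero]
    exact Finset.prod_ne_zero_iff.2 fun i _ => inv_ne_zero (hdne i)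
  · intro x
    rw [hDPM]
    exact hfhat x
end
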